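/- Decoupled problem: Suppose A = diagonal(a) and B = diagonal(b) with a, b ∈ ℝⁿ and bᵢ ≥ 0 for all i, and cᵢ ≠ 0 for all i. Set ς̄ = ½ Σᵢ bᵢ − α, and for each i let m̄ᵢ = max{ −½(aᵢ + ς̄ bᵢ + cᵢ), −½(aᵢ + ς̄ bᵢ − cᵢ) } and n̄ᵢ = fᵢ + m̄ᵢ. Assume m̄ᵢ > 0 and n̄ᵢ > 0 for all i. Then (ς̄, σ̄₁, σ̄₂) with σ̄₁ᵢ = m̄ᵢ and σ̄₂ᵢ = n̄ᵢ belongs to S⁺♯, is the unique critical point of P^d in S⁺♯ (the unique point of S⁺♯ at which the Fréchet derivative of P^d vanishes), and is a global maximizer of P^d over S⁺♯; moreover, the pair (x̄, v̄) with x̄ᵢ = cᵢ/|cᵢ| and v̄ᵢ = 1 for all i is a global minimizer of P over X_v, and P(x̄,v̄) = P^d(ς̄,σ̄₁,σ̄₂). -/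

import Mathlib

open Matrix BigOperators

/-- `G(ς,σ₁) = A + ς B + 2 diag(σ₁)`. -/
noncomputable def Gm {n : ℕ} (A B : Matrix (Fin n) (Fin n) ℝ) (ς : ℝ) (σ₁ : Fin n → ℝ) :
    Matrix (Fin n) (Fin n) ℝ :=
  A + ς • B + (2 : ℝ) • Matrix.diagonal σ₁

/-- The primal objective `P(x,v)`. -/
noncomputable def Pobj {n : ℕ} (A B : Matrix (Fin n) (Fin n) ℝ) (α : ℝ) (c f : Fin n → ℝ)
    (x v : Fin n → ℝ) : ℝ :=
  (1/2) * (x ⬝ᵥ A.mulVec x) - c ⬝ᵥ x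
    + (1/2) * ((1/2) * (x ⬝ᵥ B.mulVec x) - α)^2 - f ⬝ᵥ v

/-- The primal feasible set `X_v`. -/
def Xv (n : ℕ) : Set ((Fin n → ℝ) × (Fin n → ℝ)) :=
  {p | ∀ i, (p.2 i = 0 ∨ p.2 i = 1) ∧ -p.2 i ≤ p.1 i ∧ p.1 i ≤ p.2 i}

/-- The canonical dual function `P^d(ς,σ₁,σ₂)`. -/
noncomputable def Pd {n : ℕ} (A B : Matrix (Fin n) (Fin n) ℝ) (α : ℝ) (c f : Fin n → ℝ)
    (p : ℝ × (Fin n → ℝ) × (Fin n → ℝ)) : ℝ :=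
  -(1/2) * (c ⬝ᵥ (Gm A B p.1 p.2.1)⁻¹.mulVec c)
    - (1/4) * ∑ i, (f i + p.2.1 i + p.2.2 i)^2 / p.2.2 i
    - (1/2) * p.1^2 - α * p.1

/-- The dual feasible set `S⁺♯`. -/
def Ssharp {n : ℕ} (A B : Matrix (Fin n) (Fin n) ℝ) (α : ℝ) :
    Set (ℝ × (Fin n → ℝ) × (Fin n → ℝ)) :=
  {p | -α ≤ p.1 ∧ (∀ i, 0 ≤ p.2.1 i) ∧ (∀ i, 0 < p.2.2 i) ∧ (Gm A B p.1 p.2.1).PosDef}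

noncomputable def Fd {n : ℕ} (a b : Fin n → ℝ) (α : ℝ) (c f : Fin n → ℝ)
    (p : ℝ × (Fin n → ℝ) × (Fin n → ℝ)) : ℝ :=
  -(1/2) * ∑ i, (c i)^2 / (a i + p.1 * b i + 2 * p.2.1 i)
    - (1/4) * ∑ i, (f i + p.2.1 i + p.2.2 i)^2 / p.2.2 i
    - (1/2) * p.1^2 - α * p.1

lemma Gm_diag {n : ℕ} (a b : Fin n → ℝ) (ς : ℝ) (σ₁ : Fin n → ℝ) :
    Gm (Matrix.diagonal a) (Matrix.diagonal b) ς σ₁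
      = Matrix.diagonal (fun i => a i + ς * b i + 2 * σ₁ i) := by
  ext i j
  rcases eq_or_ne i j with h | h
  · subst h
    simp [Gm, Matrix.add_apply, Matrix.smul_apply, Matrix.diagonal_apply_eq]
  · simp [Gm, Matrix.add_apply, Matrix.smul_apply, Matrix.diagonal_apply_ne _ h]

lemma Pd_formula {n : ℕ} (a b : Fin n → ℝ) (α : ℝ) (c f : Fin n → ℝ)
    (p : ℝ × (Fin n → ℝ) × (Fin n → ℝ))
    (hg : ∀ i, a i + p.1 * b i + 2 * p.2.1 i ≠ 0) :
    Pd (Matrix.diagonal a) (Matrix.diagonal b) α c f p = Fd a b α c f p := by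
  have hinv : (Gm (Matrix.diagonal a) (Matrix.diagonal b) p.1 p.2.1)⁻¹
      = Matrix.diagonal (fun i => (a i + p.1 * b i + 2 * p.2.1 i)⁻¹) := by
    rw [Gm_diag]
    apply Matrix.inv_eq_right_inv
    rw [Matrix.diagonal_mul_diagonal]
    convert Matrix.diagonal_one with i
    exact mul_inv_cancel₀ (hg i)
  have hdot : c ⬝ᵥ (Matrix.diagonal fun i => (a i + p.1 * b i + 2 * p.2.1 i)⁻¹).mulVec c
      = ∑ i, (c i)^2 / (a i + p.1 * b i + 2 * p.2.1 i) := by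
    simp only [dotProduct, Matrix.mulVec_diagonal]
    exact Finset.sum_congr rfl fun i _ => by rw [div_eq_mul_inv]; ring
  rw [Pd, Fd, hinv, hdot]

lemma vec_decomp {n : ℕ} (w : ℝ × (Fin n → ℝ) × (Fin n → ℝ)) :
    w = w.1 • (((1:ℝ), 0, 0) : ℝ × (Fin n → ℝ) × (Fin n → ℝ))
      + ∑ i, w.2.1 i • ((0, Pi.single i 1, 0) : ℝ × (Fin n → ℝ) × (Fin n → ℝ))
      + ∑ i, w.2.2 i • ((0, 0, Pi.single i 1) : ℝ × (Fin n → ℝ) × (Fin n → ℝ)) := by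
  refine Prod.ext ?_ (Prod.ext ?_ ?_) <;>
    simp [Prod.fst_sum, Prod.snd_sum]
  · funext j
    simp [Finset.sum_apply, Pi.single_apply]
  · funext j
    simp [Finset.sum_apply, Pi.single_apply]

lemma Fd_diff {n : ℕ} (a b : Fin n → ℝ) (α : ℝ) (c f : Fin n → ℝ)
    (q : ℝ × (Fin n → ℝ) × (Fin n → ℝ))
    (hg : ∀ i, a i + q.1 * b i + 2 * q.2.1 i ≠ 0) (hs : ∀ i, q.2.2 i ≠ 0) :
    DifferentiableAt ℝ (Fd a b α c f) q := by
  have h1 : DifferentiableAt ℝ (fun p : ℝ × (Fin n → ℝ) × (Fin n → ℝ) =>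
      ∑ i, (c i)^2 / (a i + p.1 * b i + 2 * p.2.1 i)) q := by
    apply DifferentiableAt.fun_sum
    intro i _
    have hd : DifferentiableAt ℝ (fun p : ℝ × (Fin n → ℝ) × (Fin n → ℝ) =>
        a i + p.1 * b i + 2 * p.2.1 i) q := by fun_prop
    simp only [div_eq_mul_inv]
    exact (hd.inv (hg i)).const_mul _
  have h2 : DifferentiableAt ℝ (fun p : ℝ × (Fin n → ℝ) × (Fin n → ℝ) =>
      ∑ i, (f i + p.2.1 i + p.2.2 i)^2 / p.2.2 i) q := by
    apply DifferentiableAt.fun_sum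
    intro i _
    have hnum : DifferentiableAt ℝ (fun p : ℝ × (Fin n → ℝ) × (Fin n → ℝ) =>
        (f i + p.2.1 i + p.2.2 i)^2) q := by fun_prop
    have hden : DifferentiableAt ℝ (fun p : ℝ × (Fin n → ℝ) × (Fin n → ℝ) =>
        p.2.2 i) q := by fun_prop
    simp only [div_eq_mul_inv]
    exact hnum.mul (hden.inv (hs i))
  unfold Fd
  fun_prop

lemma Fd_dir0 {n : ℕ} (a b : Fin n → ℝ) (α : ℝ) (c f : Fin n → ℝ)
    (q : ℝ × (Fin n → ℝ) × (Fin n → ℝ))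
    (hg : ∀ i, a i + q.1 * b i + 2 * q.2.1 i ≠ 0) :
    HasDerivAt (fun t : ℝ => Fd a b α c f (q + t • (((1:ℝ), 0, 0) : ℝ × (Fin n → ℝ) × (Fin n → ℝ))))
      ((1/2) * ∑ i, (c i)^2 * b i / (a i + q.1 * b i + 2 * q.2.1 i)^2 - q.1 - α) 0 := by
  have hfun : (fun t : ℝ => Fd a b α c f (q + t • (((1:ℝ), 0, 0) : ℝ × (Fin n → ℝ) × (Fin n → ℝ))))
      = fun t : ℝ => -(1/2) * ∑ i, (c i)^2 / (a i + (q.1 + t) * b i + 2 * q.2.1 i)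
        - (1/4) * ∑ i, (f i + q.2.1 i + q.2.2 i)^2 / q.2.2 i
        - (1/2) * (q.1 + t)^2 - α * (q.1 + t) := by
    funext t
    simp [Fd, Prod.fst_add, Prod.snd_add, Prod.smul_fst, Prod.smul_snd, smul_eq_mul]
  rw [hfun]
  have hsum : HasDerivAt (fun t : ℝ => ∑ i, (c i)^2 / (a i + (q.1 + t) * b i + 2 * q.2.1 i))
      (∑ i, -((c i)^2 * b i / (a i + q.1 * b i + 2 * q.2.1 i)^2)) 0 := by
    apply HasDerivAt.fun_sum
    intro i _
    have hden : HasDerivAt (fun t : ℝ => a i + (q.1 + t) * b i + 2 * q.2.1 i) (b i) 0 := by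
      simpa using ((((hasDerivAt_id (0:ℝ)).const_add q.1).mul_const (b i)).const_add (a i)).add_const
        (2 * q.2.1 i)
    have h := (hasDerivAt_const (0:ℝ) ((c i)^2)).div hden (by simpa using hg i)
    refine h.congr_deriv ?_
    simp
    try ring
  have h2 : HasDerivAt (fun t : ℝ => (1/2) * (q.1 + t)^2) q.1 0 := by
    have := (((hasDerivAt_id (0:ℝ)).const_add q.1).pow 2).const_mul (1/2 : ℝ)
    refine this.congr_deriv ?_
    simp
  have h3 : HasDerivAt (fun t : ℝ => α * (q.1 + t)) α 0 := by
    simpa using ((hasDerivAt_id (0:ℝ)).const_add q.1).const_mul α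
  have := (((hsum.const_mul (-(1/2) : ℝ)).sub_const
    ((1/4) * ∑ i, (f i + q.2.1 i + q.2.2 i)^2 / q.2.2 i)).fun_sub h2).fun_sub h3
  refine this.congr_deriv ?_
  rw [Finset.sum_neg_distrib]
  ring

lemma Fd_dir1 {n : ℕ} (a b : Fin n → ℝ) (α : ℝ) (c f : Fin n → ℝ)
    (q : ℝ × (Fin n → ℝ) × (Fin n → ℝ))
    (hg : ∀ i, a i + q.1 * b i + 2 * q.2.1 i ≠ 0) (j : Fin n) :
    HasDerivAt (fun t : ℝ => Fd a b α c f
        (q + t • ((0, Pi.single j 1, 0) : ℝ × (Fin n → ℝ) × (Fin n → ℝ))))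
      ((c j)^2 / (a j + q.1 * b j + 2 * q.2.1 j)^2
        - (1/2) * (f j + q.2.1 j + q.2.2 j) / q.2.2 j) 0 := by
  have hfun : (fun t : ℝ => Fd a b α c f
        (q + t • ((0, Pi.single j 1, 0) : ℝ × (Fin n → ℝ) × (Fin n → ℝ))))
      = fun t : ℝ =>
        -(1/2) * ∑ i, (c i)^2 / (a i + q.1 * b i + 2 * (q.2.1 i + t * (if i = j then (1:ℝ) else 0)))
        - (1/4) * ∑ i, (f i + (q.2.1 i + t * (if i = j then (1:ℝ) else 0)) + q.2.2 i)^2 / q.2.2 i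
        - (1/2) * q.1^2 - α * q.1 := by
    funext t
    simp [Fd, Prod.fst_add, Prod.snd_add, Prod.smul_fst, Prod.smul_snd, Pi.single_apply,
      smul_eq_mul]
  rw [hfun]
  have hsum1 : HasDerivAt (fun t : ℝ =>
      ∑ i, (c i)^2 / (a i + q.1 * b i + 2 * (q.2.1 i + t * (if i = j then (1:ℝ) else 0))))
      (∑ i, -((c i)^2 * (2 * (if i = j then (1:ℝ) else 0))
        / (a i + q.1 * b i + 2 * q.2.1 i)^2)) 0 := by
    apply HasDerivAt.fun_sum
    intro i _
    have hden : HasDerivAt (fun t : ℝ =>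
        a i + q.1 * b i + 2 * (q.2.1 i + t * (if i = j then (1:ℝ) else 0)))
        (2 * (if i = j then (1:ℝ) else 0)) 0 := by
      simpa using ((((hasDerivAt_id (0:ℝ)).mul_const (if i = j then (1:ℝ) else 0)).const_add
        (q.2.1 i)).const_mul 2).const_add (a i + q.1 * b i)
    have h := (hasDerivAt_const (0:ℝ) ((c i)^2)).div hden (by simpa using hg i)
    refine h.congr_deriv ?_
    simp
    try ring
  have hsum2 : HasDerivAt (fun t : ℝ =>
      ∑ i, (f i + (q.2.1 i + t * (if i = j then (1:ℝ) else 0)) + q.2.2 i)^2 / q.2.2 i)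
      (∑ i, 2 * (f i + q.2.1 i + q.2.2 i) * (if i = j then (1:ℝ) else 0) / q.2.2 i) 0 := by
    apply HasDerivAt.fun_sum
    intro i _
    have hbase : HasDerivAt (fun t : ℝ =>
        f i + (q.2.1 i + t * (if i = j then (1:ℝ) else 0)) + q.2.2 i)
        (if i = j then (1:ℝ) else 0) 0 := by
      simpa using ((((hasDerivAt_id (0:ℝ)).mul_const (if i = j then (1:ℝ) else 0)).const_add
        (q.2.1 i)).const_add (f i)).add_const (q.2.2 i)
    have hnum : HasDerivAt (fun t : ℝ =>
        (f i + (q.2.1 i + t * (if i = j then (1:ℝ) else 0)) + q.2.2 i)^2)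
        (2 * (f i + q.2.1 i + q.2.2 i) * (if i = j then (1:ℝ) else 0)) 0 := by
      have := hbase.pow 2
      refine this.congr_deriv ?_
      simp
      try ring
    exact hnum.div_const _
  have := (((hsum1.const_mul (-(1/2) : ℝ)).fun_sub (hsum2.const_mul (1/4 : ℝ))).sub_const
    ((1/2) * q.1^2)).sub_const (α * q.1)
  refine this.congr_deriv ?_
  rw [Finset.sum_eq_single_of_mem j (Finset.mem_univ j)
      (fun i _ hij => by simp [hij]),
    Finset.sum_eq_single_of_mem j (Finset.mem_univ j)
      (fun i _ hij => by simp [hij])]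
  simp
  try ring

lemma Fd_dir2 {n : ℕ} (a b : Fin n → ℝ) (α : ℝ) (c f : Fin n → ℝ)
    (q : ℝ × (Fin n → ℝ) × (Fin n → ℝ))
    (hs : ∀ i, q.2.2 i ≠ 0) (j : Fin n) :
    HasDerivAt (fun t : ℝ => Fd a b α c f
        (q + t • ((0, 0, Pi.single j 1) : ℝ × (Fin n → ℝ) × (Fin n → ℝ))))
      (((f j + q.2.1 j)^2 - (q.2.2 j)^2) / (4 * (q.2.2 j)^2)) 0 := by
  have hfun : (fun t : ℝ => Fd a b α c f
        (q + t • ((0, 0, Pi.single j 1) : ℝ × (Fin n → ℝ) × (Fin n → ℝ))))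
      = fun t : ℝ =>
        -(1/2) * ∑ i, (c i)^2 / (a i + q.1 * b i + 2 * q.2.1 i)
        - (1/4) * ∑ i, (f i + q.2.1 i + (q.2.2 i + t * (if i = j then (1:ℝ) else 0)))^2
            / (q.2.2 i + t * (if i = j then (1:ℝ) else 0))
        - (1/2) * q.1^2 - α * q.1 := by
    funext t
    simp [Fd, Prod.fst_add, Prod.snd_add, Prod.smul_fst, Prod.smul_snd, Pi.single_apply,
      smul_eq_mul]
  rw [hfun]
  have hsum2 : HasDerivAt (fun t : ℝ =>
      ∑ i, (f i + q.2.1 i + (q.2.2 i + t * (if i = j then (1:ℝ) else 0)))^2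
        / (q.2.2 i + t * (if i = j then (1:ℝ) else 0)))
      (∑ i, (2 * (f i + q.2.1 i + q.2.2 i) * (if i = j then (1:ℝ) else 0) * q.2.2 i
        - (f i + q.2.1 i + q.2.2 i)^2 * (if i = j then (1:ℝ) else 0)) / (q.2.2 i)^2) 0 := by
    apply HasDerivAt.fun_sum
    intro i _
    have hbase : HasDerivAt (fun t : ℝ =>
        f i + q.2.1 i + (q.2.2 i + t * (if i = j then (1:ℝ) else 0)))
        (if i = j then (1:ℝ) else 0) 0 := by
      simpa using (((hasDerivAt_id (0:ℝ)).mul_const (if i = j then (1:ℝ) else 0)).const_add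
        (q.2.2 i)).const_add (f i + q.2.1 i)
    have hnum : HasDerivAt (fun t : ℝ =>
        (f i + q.2.1 i + (q.2.2 i + t * (if i = j then (1:ℝ) else 0)))^2)
        (2 * (f i + q.2.1 i + q.2.2 i) * (if i = j then (1:ℝ) else 0)) 0 := by
      have := hbase.pow 2
      refine this.congr_deriv ?_
      simp
      try ring
    have hden : HasDerivAt (fun t : ℝ => q.2.2 i + t * (if i = j then (1:ℝ) else 0))
        (if i = j then (1:ℝ) else 0) 0 := by
      simpa using ((hasDerivAt_id (0:ℝ)).mul_const (if i = j then (1:ℝ) else 0)).const_add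
        (q.2.2 i)
    have h := hnum.div hden (by simpa using hs i)
    refine h.congr_deriv ?_
    simp
    try ring
  have := (((hasDerivAt_const (0:ℝ)
      (-(1/2) * ∑ i, (c i)^2 / (a i + q.1 * b i + 2 * q.2.1 i))).fun_sub
      (hsum2.const_mul (1/4 : ℝ))).sub_const ((1/2) * q.1^2)).sub_const (α * q.1)
  refine this.congr_deriv ?_
  rw [Finset.sum_eq_single_of_mem j (Finset.mem_univ j)
      (fun i _ hij => by simp [hij])]
  simp only [eq_self_iff_true, if_true]
  have h2 := hs j
  field_simp
  ring

set_option maxHeartbeats 1000000 in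
theorem decoupled_problem {n : ℕ} (hn : 0 < n)
    (A B : Matrix (Fin n) (Fin n) ℝ)
    (α : ℝ) (hα : 0 < α) (c f : Fin n → ℝ)
    (a b : Fin n → ℝ)
    (hA : A = Matrix.diagonal a) (hB : B = Matrix.diagonal b)
    (hb : ∀ i, 0 ≤ b i) (hc : ∀ i, c i ≠ 0)
    (ςb : ℝ) (hςb : ςb = (1/2) * ∑ i, b i - α)
    (mb nb : Fin n → ℝ)
    (hm : ∀ i, mb i = max (-(1/2) * (a i + ςb * b i + c i))
                         (-(1/2) * (a i + ςb * b i - c i)))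
    (hnb : ∀ i, nb i = f i + mb i)
    (hmpos : ∀ i, 0 < mb i) (hnpos : ∀ i, 0 < nb i)
    (xb vb : Fin n → ℝ)
    (hx : ∀ i, xb i = c i / |c i|) (hv : ∀ i, vb i = 1) :
    (ςb, mb, nb) ∈ Ssharp A B α ∧
    fderiv ℝ (Pd A B α c f) (ςb, mb, nb) = 0 ∧
    (∀ q ∈ Ssharp A B α, fderiv ℝ (Pd A B α c f) q = 0 → q = (ςb, mb, nb)) ∧
    (∀ q ∈ Ssharp A B α, Pd A B α c f q ≤ Pd A B α c f (ςb, mb, nb)) ∧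
    (xb, vb) ∈ Xv n ∧
    (∀ q ∈ Xv n, Pobj A B α c f xb vb ≤ Pobj A B α c f q.1 q.2) ∧
    Pobj A B α c f xb vb = Pd A B α c f (ςb, mb, nb) := by
  subst hA
  subst hB
  have hcabs : ∀ i, (0:ℝ) < |c i| := fun i => abs_pos.mpr (hc i)
  have habs : ∀ i, a i + ςb * b i + 2 * mb i = |c i| := by
    intro i
    rcases le_or_gt (c i) 0 with h | h
    · rw [hm i, max_eq_left (by linarith), abs_of_nonpos h]; ring
    · rw [hm i, max_eq_right (by linarith), abs_of_pos h]; ring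
  have hSb : ∑ i, b i = 2 * (ςb + α) := by rw [hςb]; ring
  have hmb' : ∀ i, mb i = (1/2) * |c i| - (1/2) * (a i + ςb * b i) := by
    intro i; have := habs i; linarith
  -- Part 1: membership
  have hmem : ((ςb, mb, nb) : ℝ × (Fin n → ℝ) × (Fin n → ℝ))
      ∈ Ssharp (Matrix.diagonal a) (Matrix.diagonal b) α := by
    refine ⟨?_, fun i => (hmpos i).le, hnpos, ?_⟩
    · have h0 : (0:ℝ) ≤ ∑ i, b i := Finset.sum_nonneg fun i _ => hb i
      rw [hςb]; linarith
    · rw [Gm_diag, Matrix.posDef_diagonal_iff]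
      intro i
      exact lt_of_lt_of_eq (hcabs i) (habs i).symm
  have hgpos : ∀ q ∈ Ssharp (Matrix.diagonal a) (Matrix.diagonal b) α,
      ∀ i, 0 < a i + q.1 * b i + 2 * q.2.1 i := by
    intro q hq i
    have h := hq.2.2.2
    rw [Gm_diag, Matrix.posDef_diagonal_iff] at h
    exact h i
  -- directional derivative facts at any point of S⁺♯
  have hdd : ∀ q ∈ Ssharp (Matrix.diagonal a) (Matrix.diagonal b) α,
      fderiv ℝ (Pd (Matrix.diagonal a) (Matrix.diagonal b) α c f) q = fderiv ℝ (Fd a b α c f) q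
      ∧ fderiv ℝ (Fd a b α c f) q (((1:ℝ), 0, 0))
          = (1/2) * ∑ i, (c i)^2 * b i / (a i + q.1 * b i + 2 * q.2.1 i)^2 - q.1 - α
      ∧ (∀ j, fderiv ℝ (Fd a b α c f) q ((0, Pi.single j 1, 0))
          = (c j)^2 / (a j + q.1 * b j + 2 * q.2.1 j)^2
            - (1/2) * (f j + q.2.1 j + q.2.2 j) / q.2.2 j)
      ∧ (∀ j, fderiv ℝ (Fd a b α c f) q ((0, 0, Pi.single j 1))
          = ((f j + q.2.1 j)^2 - (q.2.2 j)^2) / (4 * (q.2.2 j)^2)) := by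
    intro q hq
    have hgq : ∀ i, a i + q.1 * b i + 2 * q.2.1 i ≠ 0 := fun i => (hgpos q hq i).ne'
    have hsq : ∀ i, q.2.2 i ≠ 0 := fun i => (hq.2.2.1 i).ne'
    have hdiff := Fd_diff a b α c f q hgq hsq
    have hF := hdiff.hasFDerivAt
    have hdir : ∀ w : ℝ × (Fin n → ℝ) × (Fin n → ℝ),
        HasDerivAt (fun t : ℝ => Fd a b α c f (q + t • w)) (fderiv ℝ (Fd a b α c f) q w) 0 := by
      intro w
      have hline : HasDerivAt (fun t : ℝ => q + t • w) w 0 := by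
        simpa using ((hasDerivAt_id (0:ℝ)).smul_const w).const_add q
      have hq0 : q + (0:ℝ) • w = q := by simp
      exact HasFDerivAt.comp_hasDerivAt (0:ℝ) (by rwa [hq0]) hline
    refine ⟨?_, (hdir _).unique (Fd_dir0 a b α c f q hgq),
      fun j => (hdir _).unique (Fd_dir1 a b α c f q hgq j),
      fun j => (hdir _).unique (Fd_dir2 a b α c f q hsq j)⟩
    have hU : IsOpen {p : ℝ × (Fin n → ℝ) × (Fin n → ℝ) |
        ∀ i, a i + p.1 * b i + 2 * p.2.1 i ≠ 0} := by
      have heq : {p : ℝ × (Fin n → ℝ) × (Fin n → ℝ) | ∀ i, a i + p.1 * b i + 2 * p.2.1 i ≠ 0}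
          = ⋂ i, {p : ℝ × (Fin n → ℝ) × (Fin n → ℝ) | a i + p.1 * b i + 2 * p.2.1 i ≠ 0} := by
        ext p; simp
      rw [heq]
      apply isOpen_iInter_of_finite
      intro i
      have hcont : Continuous (fun p : ℝ × (Fin n → ℝ) × (Fin n → ℝ) =>
          a i + p.1 * b i + 2 * p.2.1 i) := by fun_prop
      exact isOpen_compl_singleton.preimage hcont
    have hEv : Pd (Matrix.diagonal a) (Matrix.diagonal b) α c f =ᶠ[nhds q] Fd a b α c f :=
      Filter.eventuallyEq_of_mem (hU.mem_nhds hgq) fun p hp => Pd_formula a b α c f p hp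
    exact hEv.fderiv_eq
  obtain ⟨hfe, hd0, hd1, hd2⟩ := hdd _ hmem
  -- Part 2: fderiv vanishes at the candidate
  have hz0 : fderiv ℝ (Fd a b α c f) (ςb, mb, nb) (((1:ℝ), 0, 0)) = 0 := by
    rw [hd0]
    have hsumb : ∑ i, (c i)^2 * b i / (a i + ςb * b i + 2 * mb i)^2 = ∑ i, b i := by
      refine Finset.sum_congr rfl fun i _ => ?_
      rw [habs i, sq_abs, mul_comm ((c i)^2) (b i), mul_div_assoc,
        div_self (pow_ne_zero 2 (hc i)), mul_one]
    show (1/2) * ∑ i, (c i)^2 * b i / (a i + ςb * b i + 2 * mb i)^2 - ςb - α = 0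
    rw [hsumb, hSb]; ring
  have hz1 : ∀ j, fderiv ℝ (Fd a b α c f) (ςb, mb, nb) ((0, Pi.single j 1, 0)) = 0 := by
    intro j
    rw [hd1 j]
    show (c j)^2 / (a j + ςb * b j + 2 * mb j)^2 - (1/2) * (f j + mb j + nb j) / nb j = 0
    rw [habs j, sq_abs, div_self (pow_ne_zero 2 (hc j)),
      show f j + mb j + nb j = 2 * nb j by have := hnb j; linarith]
    field_simp [(hnpos j).ne']
    norm_num
  have hz2 : ∀ j, fderiv ℝ (Fd a b α c f) (ςb, mb, nb) ((0, 0, Pi.single j 1)) = 0 := by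
    intro j
    rw [hd2 j]
    show ((f j + mb j)^2 - (nb j)^2) / (4 * (nb j)^2) = 0
    rw [show f j + mb j = nb j from (hnb j).symm]
    simp
  have hzero : fderiv ℝ (Pd (Matrix.diagonal a) (Matrix.diagonal b) α c f) (ςb, mb, nb) = 0 := by
    rw [hfe]
    apply ContinuousLinearMap.ext
    intro w
    rw [ContinuousLinearMap.zero_apply]
    conv_lhs => rw [vec_decomp w]
    simp only [map_add, map_sum, _root_.map_smul, hz0, hz1, hz2, smul_eq_mul, mul_zero,
      Finset.sum_const_zero, add_zero]
  -- value of Pd at candidate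
  have hgcand : ∀ i, a i + ((ςb, mb, nb) : ℝ × (Fin n → ℝ) × (Fin n → ℝ)).1 * b i
      + 2 * ((ςb, mb, nb) : ℝ × (Fin n → ℝ) × (Fin n → ℝ)).2.1 i ≠ 0 := by
    intro i
    show a i + ςb * b i + 2 * mb i ≠ 0
    rw [habs i]; exact (hcabs i).ne'
  have hPdc : Pd (Matrix.diagonal a) (Matrix.diagonal b) α c f (ςb, mb, nb)
      = (1/2) * (∑ i, a i) - (∑ i, |c i|) - (∑ i, f i) + (1/2) * ςb^2 := by
    rw [Pd_formula a b α c f (ςb, mb, nb) hgcand]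
    show -(1/2) * ∑ i, (c i)^2 / (a i + ςb * b i + 2 * mb i)
        - (1/4) * ∑ i, (f i + mb i + nb i)^2 / nb i
        - (1/2) * ςb^2 - α * ςb = _
    have e1 : ∑ i, (c i)^2 / (a i + ςb * b i + 2 * mb i) = ∑ i, |c i| := by
      refine Finset.sum_congr rfl fun i _ => ?_
      rw [habs i, ← sq_abs (c i), sq, mul_div_assoc, div_self (hcabs i).ne', mul_one]
    have e2 : ∑ i, (f i + mb i + nb i)^2 / nb i = ∑ i, (4 * nb i) := by
      refine Finset.sum_congr rfl fun i _ => ?_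
      rw [show f i + mb i + nb i = 2 * nb i by have := hnb i; linarith]
      field_simp [(hnpos i).ne']
      ring
    have e3 : ∑ i, ((4:ℝ) * nb i) = 4 * ∑ i, nb i := by rw [Finset.mul_sum]
    have e4 : ∑ i, nb i = (∑ i, f i) + (1/2) * (∑ i, |c i|) - (1/2) * (∑ i, a i)
        - ςb * (1/2) * (∑ i, b i) := by
      have hper : ∀ i ∈ (Finset.univ : Finset (Fin n)),
          nb i = f i + (1/2) * |c i| - (1/2) * a i - ςb * (1/2) * b i := by
        intro i _
        rw [hnb i]
        have := hmb' i
        linarith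
      rw [Finset.sum_congr rfl hper]
      simp only [Finset.sum_add_distrib, Finset.sum_sub_distrib, ← Finset.mul_sum]
    rw [e1, e2, e3, e4]
    linear_combination (ςb * (1/2)) * hSb
  -- value of Pobj at candidate
  have hPobjval : Pobj (Matrix.diagonal a) (Matrix.diagonal b) α c f xb vb
      = (1/2) * (∑ i, a i) - (∑ i, |c i|) - (∑ i, f i) + (1/2) * ςb^2 := by
    rw [Pobj]
    have d1 : xb ⬝ᵥ (Matrix.diagonal a).mulVec xb = ∑ i, a i := by
      simp only [dotProduct, Matrix.mulVec_diagonal]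
      refine Finset.sum_congr rfl fun i _ => ?_
      rw [hx i, show c i / |c i| * (a i * (c i / |c i|))
          = a i * ((c i * c i) / (|c i| * |c i|)) from by ring,
        abs_mul_abs_self, div_self (mul_ne_zero (hc i) (hc i)), mul_one]
    have d2 : xb ⬝ᵥ (Matrix.diagonal b).mulVec xb = ∑ i, b i := by
      simp only [dotProduct, Matrix.mulVec_diagonal]
      refine Finset.sum_congr rfl fun i _ => ?_
      rw [hx i, show c i / |c i| * (b i * (c i / |c i|))
          = b i * ((c i * c i) / (|c i| * |c i|)) from by ring,
        abs_mul_abs_self, div_self (mul_ne_zero (hc i) (hc i)), mul_one]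
    have d3 : c ⬝ᵥ xb = ∑ i, |c i| := by
      simp only [dotProduct]
      refine Finset.sum_congr rfl fun i _ => ?_
      rw [hx i, show c i * (c i / |c i|) = c i * c i / |c i| from by ring,
        ← abs_mul_abs_self (c i), mul_div_assoc, div_self (hcabs i).ne', mul_one]
    have d4 : f ⬝ᵥ vb = ∑ i, f i := by
      simp only [dotProduct]
      refine Finset.sum_congr rfl fun i _ => ?_
      rw [hv i, mul_one]
    rw [d1, d2, d3, d4, ← hςb]
    ring
  -- Part 3: uniqueness of the critical point
  have huniq : ∀ q ∈ Ssharp (Matrix.diagonal a) (Matrix.diagonal b) α,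
      fderiv ℝ (Pd (Matrix.diagonal a) (Matrix.diagonal b) α c f) q = 0 → q = (ςb, mb, nb) := by
    intro q hq hcrit
    obtain ⟨hfe', hd0', hd1', hd2'⟩ := hdd q hq
    have hL0 : fderiv ℝ (Fd a b α c f) q = 0 := by rw [← hfe', hcrit]
    simp only [hL0, ContinuousLinearMap.zero_apply] at hd0' hd1' hd2'
    have hσpos : ∀ j, 0 < q.2.2 j := hq.2.2.1
    have hgq := hgpos q hq
    have hNj : ∀ j, f j + q.2.1 j = q.2.2 j := by
      intro j
      have h2 := (hd2' j).symm
      have hσ := hσpos j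
      have hnum : (f j + q.2.1 j)^2 - (q.2.2 j)^2 = 0 := by
        have h4 : (4:ℝ) * (q.2.2 j)^2 ≠ 0 := by positivity
        rw [div_eq_zero_iff] at h2
        rcases h2 with h2 | h2
        · exact h2
        · exact absurd h2 h4
      have hfac : (f j + q.2.1 j - q.2.2 j) * (f j + q.2.1 j + q.2.2 j) = 0 := by
        linear_combination hnum
      rcases mul_eq_zero.mp hfac with h | h
      · linarith
      · exfalso
        have hgj := hgq j
        have hc2 : (0:ℝ) < (c j)^2 :=
          lt_of_le_of_ne (sq_nonneg _) (Ne.symm (pow_ne_zero 2 (hc j)))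
        have hpos : 0 < (c j)^2 / (a j + q.1 * b j + 2 * q.2.1 j)^2 :=
          div_pos hc2 (pow_pos hgj 2)
        have hz : (1/2) * (f j + q.2.1 j + q.2.2 j) / q.2.2 j = 0 := by
          rw [show f j + q.2.1 j + q.2.2 j = 0 by linarith]
          simp
        have := hd1' j
        rw [hz] at this
        linarith
    have hGj : ∀ j, a j + q.1 * b j + 2 * q.2.1 j = |c j| := by
      intro j
      have h1 := (hd1' j).symm
      have hσ := hσpos j
      have hgj := hgq j
      have hhalf : (1/2) * (f j + q.2.1 j + q.2.2 j) / q.2.2 j = 1 := by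
        rw [show f j + q.2.1 j + q.2.2 j = 2 * q.2.2 j by have := hNj j; linarith]
        field_simp
      rw [hhalf] at h1
      have hGsq : (c j)^2 = (a j + q.1 * b j + 2 * q.2.1 j)^2 := by
        have hne : (a j + q.1 * b j + 2 * q.2.1 j)^2 ≠ 0 := (pow_pos hgj 2).ne'
        field_simp at h1
        linarith
      have hfac : (a j + q.1 * b j + 2 * q.2.1 j - |c j|)
          * (a j + q.1 * b j + 2 * q.2.1 j + |c j|) = 0 := by
        linear_combination -hGsq - sq_abs (c j)
      rcases mul_eq_zero.mp hfac with h | h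
      · linarith
      · exfalso
        have := hcabs j
        linarith
    have hq1 : q.1 = ςb := by
      have h0 := hd0'.symm
      have hsum : ∑ i, (c i)^2 * b i / (a i + q.1 * b i + 2 * q.2.1 i)^2 = ∑ i, b i := by
        refine Finset.sum_congr rfl fun i _ => ?_
        rw [hGj i, sq_abs, mul_comm ((c i)^2) (b i), mul_div_assoc,
          div_self (pow_ne_zero 2 (hc i)), mul_one]
      rw [hsum] at h0
      rw [hςb]; linarith
    have hq2 : q.2.1 = mb := by
      funext j
      have h := hGj j
      rw [hq1] at h
      have := habs j
      linarith
    have hq3 : q.2.2 = nb := by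
      funext j
      have h := hNj j
      rw [hq2] at h
      rw [← h, hnb j]
    exact Prod.ext hq1 (Prod.ext hq2 hq3)
  -- Part 4: global maximality over S⁺♯
  have hmax : ∀ q ∈ Ssharp (Matrix.diagonal a) (Matrix.diagonal b) α,
      Pd (Matrix.diagonal a) (Matrix.diagonal b) α c f q
        ≤ Pd (Matrix.diagonal a) (Matrix.diagonal b) α c f (ςb, mb, nb) := by
    intro q hq
    have hgq := hgpos q hq
    have hσ := hq.2.2.1
    rw [Pd_formula a b α c f q (fun i => (hgq i).ne'), hPdc]
    unfold Fd
    have t1 : -(1/2) * ∑ i, (c i)^2 / (a i + q.1 * b i + 2 * q.2.1 i)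
        ≤ ∑ i, ((1/2) * (a i + q.1 * b i + 2 * q.2.1 i) - |c i|) := by
      rw [Finset.mul_sum]
      refine Finset.sum_le_sum fun i _ => ?_
      have hgi := hgq i
      have e : (c i)^2 / (a i + q.1 * b i + 2 * q.2.1 i) * (a i + q.1 * b i + 2 * q.2.1 i)
          = (c i)^2 := div_mul_cancel₀ _ hgi.ne'
      nlinarith [sq_nonneg (a i + q.1 * b i + 2 * q.2.1 i - |c i|), sq_abs (c i), hgi, e]
    have t2 : -(1/4) * ∑ i, (f i + q.2.1 i + q.2.2 i)^2 / q.2.2 i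
        ≤ ∑ i, (-(f i) - q.2.1 i) := by
      rw [Finset.mul_sum]
      refine Finset.sum_le_sum fun i _ => ?_
      have hσi := hσ i
      have e : (f i + q.2.1 i + q.2.2 i)^2 / q.2.2 i * q.2.2 i
          = (f i + q.2.1 i + q.2.2 i)^2 := div_mul_cancel₀ _ hσi.ne'
      nlinarith [sq_nonneg (f i + q.2.1 i - q.2.2 i), hσi, e]
    have t3 : -(1/2) * q.1^2 - α * q.1 ≤ (1/2) * ςb^2 - q.1 * (1/2) * (∑ i, b i) := by
      have h := sq_nonneg ((1/2) * (∑ i, b i) - α - q.1)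
      rw [hςb]
      nlinarith [h]
    have tL : (∑ i, ((1/2) * (a i + q.1 * b i + 2 * q.2.1 i) - |c i|))
        + (∑ i, (-(f i) - q.2.1 i))
        = (1/2) * (∑ i, a i) + q.1 * (1/2) * (∑ i, b i) - (∑ i, |c i|) - (∑ i, f i) := by
      rw [← Finset.sum_add_distrib]
      have hper : ∀ i ∈ (Finset.univ : Finset (Fin n)),
          ((1/2) * (a i + q.1 * b i + 2 * q.2.1 i) - |c i|) + (-(f i) - q.2.1 i)
            = (1/2) * a i + q.1 * (1/2) * b i - |c i| - f i := fun i _ => by ring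
      rw [Finset.sum_congr rfl hper]
      simp only [Finset.sum_add_distrib, Finset.sum_sub_distrib, ← Finset.mul_sum]
    linarith [t1, t2, t3, tL]
  -- Part 5: primal feasibility
  have hXvmem : ((xb, vb) : (Fin n → ℝ) × (Fin n → ℝ)) ∈ Xv n := by
    intro i
    have habs1 : |xb i| = 1 := by
      rw [hx i, abs_div, abs_abs, div_self (abs_ne_zero.mpr (hc i))]
    have hle := abs_le.mp habs1.le
    refine ⟨Or.inr (hv i), ?_, ?_⟩
    · show -vb i ≤ xb i
      rw [hv i]; exact hle.1
    · show xb i ≤ vb i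
      rw [hv i]; exact hle.2
  -- Pobj in coordinates
  have hPx : ∀ x v : Fin n → ℝ, Pobj (Matrix.diagonal a) (Matrix.diagonal b) α c f x v
      = (1/2) * (∑ i, a i * (x i)^2) - (∑ i, c i * x i)
        + (1/2) * ((1/2) * (∑ i, b i * (x i)^2) - α)^2 - (∑ i, f i * v i) := by
    intro x v
    rw [Pobj]
    have da : x ⬝ᵥ (Matrix.diagonal a).mulVec x = ∑ i, a i * (x i)^2 := by
      simp only [dotProduct, Matrix.mulVec_diagonal]
      exact Finset.sum_congr rfl fun i _ => by ring
    have db : x ⬝ᵥ (Matrix.diagonal b).mulVec x = ∑ i, b i * (x i)^2 := by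
      simp only [dotProduct, Matrix.mulVec_diagonal]
      exact Finset.sum_congr rfl fun i _ => by ring
    rw [da, db]
    rfl
  -- Part 6: global minimality of the primal
  have hmin : ∀ q ∈ Xv n, Pobj (Matrix.diagonal a) (Matrix.diagonal b) α c f xb vb
      ≤ Pobj (Matrix.diagonal a) (Matrix.diagonal b) α c f q.1 q.2 := by
    intro p hp
    rw [hPobjval, hPx p.1 p.2]
    have hkey : ∀ i ∈ (Finset.univ : Finset (Fin n)),
        (1/2) * (a i + ςb * b i) - |c i| - f i
          ≤ (1/2) * (a i + ςb * b i) * (p.1 i)^2 - c i * p.1 i - f i * p.2 i := by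
      intro i _
      obtain ⟨hv01, hxl, hxr⟩ := hp i
      have ht : a i + ςb * b i = |c i| - 2 * mb i := by linarith [habs i]
      have hfm : 0 < f i + mb i := by rw [← hnb i]; exact hnpos i
      rcases hv01 with h0 | h1
      · have hx0 : p.1 i = 0 := by
          rw [h0] at hxr hxl
          simp only [neg_zero] at hxl
          linarith
        rw [hx0, h0]
        have := abs_nonneg (c i)
        nlinarith [hmpos i]
      · rw [h1] at hxl hxr ⊢
        have hA2 : c i * p.1 i ≤ |c i| * |p.1 i| := by
          rw [← abs_mul]; exact le_abs_self _
        have hA1 : 0 ≤ (|c i| - (a i + ςb * b i)) * (1 - (p.1 i)^2) :=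
          mul_nonneg (by linarith [hmpos i]) (by nlinarith)
        have hA3 : 0 ≤ |c i| * (|p.1 i| - 1)^2 := mul_nonneg (abs_nonneg _) (sq_nonneg _)
        have hA4 : |c i| * (|p.1 i| - 1)^2
            = |c i| * (p.1 i)^2 - 2 * (|c i| * |p.1 i|) + |c i| := by
          rw [sub_sq, sq_abs, one_pow, mul_one]
          ring
        linarith [hA1, hA2, hA3, hA4]
    have hsum := Finset.sum_le_sum hkey
    have hL : ∑ i, ((1/2) * (a i + ςb * b i) - |c i| - f i)
        = (1/2) * (∑ i, a i) + ςb * (1/2) * (∑ i, b i) - (∑ i, |c i|) - (∑ i, f i) := by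
      have hper : ∀ i ∈ (Finset.univ : Finset (Fin n)),
          (1/2) * (a i + ςb * b i) - |c i| - f i
            = (1/2) * a i + ςb * (1/2) * b i - |c i| - f i := fun i _ => by ring
      rw [Finset.sum_congr rfl hper]
      simp only [Finset.sum_add_distrib, Finset.sum_sub_distrib, ← Finset.mul_sum]
    have hR : ∑ i, ((1/2) * (a i + ςb * b i) * (p.1 i)^2 - c i * p.1 i - f i * p.2 i)
        = (1/2) * (∑ i, a i * (p.1 i)^2) + ςb * (1/2) * (∑ i, b i * (p.1 i)^2)
          - (∑ i, c i * p.1 i) - (∑ i, f i * p.2 i) := by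
      have hper : ∀ i ∈ (Finset.univ : Finset (Fin n)),
          (1/2) * (a i + ςb * b i) * (p.1 i)^2 - c i * p.1 i - f i * p.2 i
            = (1/2) * (a i * (p.1 i)^2) + ςb * (1/2) * (b i * (p.1 i)^2)
              - c i * p.1 i - f i * p.2 i := fun i _ => by ring
      rw [Finset.sum_congr rfl hper]
      simp only [Finset.sum_add_distrib, Finset.sum_sub_distrib, ← Finset.mul_sum]
    have hy : ςb * (1/2) * (∑ i, b i * (p.1 i)^2) - (1/2) * ςb^2 - α * ςb
        ≤ (1/2) * ((1/2) * (∑ i, b i * (p.1 i)^2) - α)^2 := by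
      nlinarith [sq_nonneg ((1/2) * (∑ i, b i * (p.1 i)^2) - α - ςb)]
    have hsb2 : ςb * (1/2) * (∑ i, b i) = ςb^2 + α * ςb := by rw [hSb]; ring
    rw [hL, hR] at hsum
    linarith [hsum, hy, hsb2]
  refine ⟨hmem, hzero, huniq, hmax, hXvmem, hmin, ?_⟩
  rw [hPobjval, hPdc]
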